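/- Let X be a normed linear space, f₁,…,fₙ ∈ X*, M > 0, and c₁,…,cₙ scalars. Then for every ε > 0 there exists x ∈ X with ‖x‖ < M+ε satisfying f_i(x) = c_i for all i ≤ n, if and only if |∑_{i≤n} t_i c_i| ≤ M‖∑_{i≤n} t_i f_i‖ for every choice of scalars t₁,…,tₙ (Helly's condition). -/

import Mathlib

/-- Helly's condition. -/
theorem helly_condition {X : Type*} [NormedAddCommGroup X] [NormedSpace ℝ X]
    (n : ℕ) (f : Fin n → (X →L[ℝ] ℝ)) (M : ℝ) (hM : 0 < M) (c : Fin n → ℝ) :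
    (∀ ε > (0:ℝ), ∃ x : X, ‖x‖ < M + ε ∧ ∀ i, f i x = c i) ↔
    (∀ t : Fin n → ℝ, |∑ i, t i * c i| ≤ M * ‖∑ i, t i • f i‖) := by
  constructor
  · intro h t
    set B := ‖∑ i, t i • f i‖ with hB
    have hB0 : 0 ≤ B := norm_nonneg _
    have key : ∀ ε > (0:ℝ), |∑ i, t i * c i| ≤ (M + ε) * B := by
      intro ε hε
      obtain ⟨x, hx, hfx⟩ := h ε hε
      have hsum : ∑ i, t i * c i = (∑ i, t i • f i) x := by
        simp [ContinuousLinearMap.sum_apply, hfx]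
      rw [hsum]
      calc |(∑ i, t i • f i) x| ≤ B * ‖x‖ := (∑ i, t i • f i).le_opNorm x
        _ ≤ B * (M + ε) := by
            apply mul_le_mul_of_nonneg_left hx.le hB0
        _ = (M + ε) * B := mul_comm _ _
    rcases hB0.lt_or_eq with hBpos | hB0'
    · apply le_of_forall_pos_le_add
      intro δ hδ
      have := key (δ / B) (div_pos hδ hBpos)
      calc |∑ i, t i * c i| ≤ (M + δ / B) * B := this
        _ = M * B + δ / B * B := add_mul _ _ _
        _ = M * B + δ := by rw [div_mul_cancel₀ _ hBpos.ne']
    · have := key 1 one_pos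
      rw [← hB0', mul_zero] at this ⊢
      exact this
  · intro H
    classical
    -- Step 1: find x₀ with f i x₀ = c i
    set T : X →ₗ[ℝ] (Fin n → ℝ) := LinearMap.pi (fun i => (f i : X →ₗ[ℝ] ℝ)) with hT
    have hc : c ∈ LinearMap.range T := by
      by_contra hc
      obtain ⟨φ, hφc, hφ⟩ :=
        Submodule.exists_dual_map_eq_bot_of_notMem hc inferInstance
      set t : Fin n → ℝ := fun i => φ (Pi.single i 1) with ht
      have hrepr : ∀ v : Fin n → ℝ, φ v = ∑ i, v i * t i := by
        intro v
        have hv : v = ∑ i, v i • (Pi.single i 1 : Fin n → ℝ) := by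
          ext j
          simp [Pi.single_apply, Finset.sum_apply, eq_comm]
        conv_lhs => rw [hv]
        simp [map_sum, map_smul, smul_eq_mul, ht]
      have hφ0 : ∀ x : X, φ (T x) = 0 := by
        intro x
        have hmem : φ (T x) ∈ (LinearMap.range T).map φ :=
          Submodule.mem_map_of_mem ⟨x, rfl⟩
        rw [hφ] at hmem
        simpa using hmem
      have hzero : (∑ i, t i • f i) = 0 := by
        ext x
        have := hφ0 x
        rw [hrepr] at this
        have hTx : ∀ i, T x i = f i x := fun i => rfl
        simp only [hTx] at this
        simp only [ContinuousLinearMap.sum_apply, ContinuousLinearMap.smul_apply,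
          ContinuousLinearMap.zero_apply, smul_eq_mul]
        rw [Finset.sum_congr rfl (fun i _ => mul_comm (t i) (f i x))]
        exact this
      have hle := H t
      rw [hzero, norm_zero, mul_zero] at hle
      have h0 : ∑ i, t i * c i = 0 := abs_eq_zero.mp (le_antisymm hle (abs_nonneg _))
      apply hφc
      rw [hrepr c]
      rw [Finset.sum_congr rfl (fun i _ => mul_comm (c i) (t i))]
      exact h0
    obtain ⟨x₀, hx₀⟩ := hc
    have hfx₀ : ∀ i, f i x₀ = c i := fun i => congrFun hx₀ i
    intro ε hε
    set Y : Submodule ℝ X := ⨅ i, LinearMap.ker ((f i : X →ₗ[ℝ] ℝ)) with hYdef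
    have hmemY : ∀ x : X, x ∈ Y ↔ ∀ i, f i x = 0 := by
      intro x
      simp [hYdef, Submodule.mem_iInf, LinearMap.mem_ker]
    haveI hYc : IsClosed (Y : Set X) := by
      have : (Y : Set X) = ⋂ i, (LinearMap.ker ((f i : X →ₗ[ℝ] ℝ)) : Set X) := by
        simp [hYdef, Submodule.coe_iInf]
      rw [this]
      exact isClosed_iInter fun i => ContinuousLinearMap.isClosed_ker (f i)
    -- Step 2: ‖mk x₀‖ ≤ M in the quotient
    have hnorm : ‖(Submodule.Quotient.mk x₀ : X ⧸ Y)‖ ≤ M := by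
      obtain ⟨g, hg1, hgx⟩ := exists_dual_vector'' ℝ (Submodule.Quotient.mk x₀ : X ⧸ Y)
      let mkCLM : X →L[ℝ] (X ⧸ Y) :=
        Y.mkQ.mkContinuous 1 (fun x => by
          simpa using Submodule.Quotient.norm_mk_le Y x)
      let G : X →L[ℝ] ℝ := g.comp mkCLM
      have hGapp : ∀ x : X, G x = g (Submodule.Quotient.mk x) := fun x => rfl
      have hker : (⨅ i, LinearMap.ker ((f i : X →ₗ[ℝ] ℝ))) ≤
          LinearMap.ker (G : X →ₗ[ℝ] ℝ) := by
        intro x hx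
        have hxY : x ∈ Y := hx
        have hmk : (Submodule.Quotient.mk x : X ⧸ Y) = 0 :=
          (Submodule.Quotient.mk_eq_zero Y).mpr hxY
        simp [LinearMap.mem_ker, hGapp x, hmk]
      obtain ⟨t, hts⟩ := (Submodule.mem_span_range_iff_exists_fun ℝ).1 (mem_span_of_iInf_ker_le_ker hker)
      have hGf : ∀ x : X, ∑ i, t i * f i x = G x := by
        intro x
        have := LinearMap.congr_fun hts x
        simpa [LinearMap.sum_apply, smul_eq_mul] using this
      have h1 : ∑ i, t i * c i = G x₀ := by
        rw [← hGf x₀]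
        exact Finset.sum_congr rfl fun i _ => by rw [hfx₀ i]
      have h2 : (∑ i, t i • f i) = G := by
        ext x
        simpa [ContinuousLinearMap.sum_apply, smul_eq_mul] using hGf x
      have hle := H t
      rw [h1, h2] at hle
      have hGnorm : ‖G‖ ≤ 1 := by
        have h3 : ‖mkCLM‖ ≤ 1 := Y.mkQ.mkContinuous_norm_le zero_le_one _
        calc ‖G‖ ≤ ‖g‖ * ‖mkCLM‖ := ContinuousLinearMap.opNorm_comp_le g mkCLM
          _ ≤ 1 * 1 := mul_le_mul hg1 h3 (ContinuousLinearMap.opNorm_nonneg _) zero_le_one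
          _ = 1 := one_mul 1
      calc ‖(Submodule.Quotient.mk x₀ : X ⧸ Y)‖ = G x₀ := (hGapp x₀ ▸ hgx).symm
        _ ≤ |G x₀| := le_abs_self _
        _ ≤ M * ‖G‖ := hle
        _ ≤ M * 1 := mul_le_mul_of_nonneg_left hGnorm hM.le
        _ = M := mul_one M
    obtain ⟨m, hmk, hm⟩ := Submodule.Quotient.norm_mk_lt (Submodule.Quotient.mk x₀ : X ⧸ Y) hε
    refine ⟨m, lt_of_lt_of_le hm (by linarith), fun i => ?_⟩
    have hsub : m - x₀ ∈ Y := (Submodule.Quotient.eq Y).mp hmk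
    have := (hmemY (m - x₀)).mp hsub i
    rw [map_sub, hfx₀ i, sub_eq_zero] at this
    exact this.symm ▸ rfl
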